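/- Let R be a discrete valuation ring with valuation ν and residue characteristic p, let a_1,...,a_n be positive integers with p ∤ a_i for all i and p ∤ ∑_{j∈S} a_j for every nonempty proper subset S ⊊ {1,...,n}, but p | (a_1+...+a_n). Suppose x_1,...,x_n ∈ R are pairwise distinct, all reducing to 1 in the residue field, and for each i, a_i ∏_{j≠i}(x_j - x_i) = (a_1+...+a_n)∏_{j≠i} x_j in Frac(R). Then (n-1)·ν(x_i - x_j) = ν(a_1+...+a_n) for all distinct i, j. -/

import Mathlib

open Finset IsLocalRing

section Aux

open IsDiscreteValuationRing

variable {R : Type*} [CommRing R] [IsDomain R] [IsDiscreteValuationRing R]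

private lemma stmt16_addVal_unit {u : R} (h : IsUnit u) : addVal R u = 0 := by
  obtain ⟨w, rfl⟩ := h
  obtain ⟨π, hπ⟩ := IsDiscreteValuationRing.exists_irreducible R
  simpa using addVal_def (w : R) w hπ 0 (by simp)

private lemma stmt16_unit_of_addVal {u : R} (h : addVal R u = 0) : IsUnit u := by
  have h0 : u ≠ 0 := by rintro rfl; simp [addVal_zero] at h
  obtain ⟨π, hπ⟩ := IsDiscreteValuationRing.exists_irreducible R
  obtain ⟨m, w, rfl⟩ := eq_unit_mul_pow_irreducible h0 hπ
  rw [addVal_def' w hπ m] at h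
  norm_num at h
  rcases h with rfl
  exact (IsUnit.mul w.isUnit (by simp))

private lemma stmt16_addVal_prod {ι : Type*} (s : Finset ι) (f : ι → R) :
    addVal R (∏ i ∈ s, f i) = ∑ i ∈ s, addVal R (f i) := by
  classical
  induction s using Finset.induction with
  | empty => simp [addVal_one]
  | insert _ _ h ih => simp [Finset.prod_insert h, Finset.sum_insert h, addVal_mul, ih]

end Aux

/-- Lemma 9.2 (valuations of root differences at a prime regular at infinity):
let `R` be a discrete valuation ring with residue characteristic `p`, and
`a₁, …, aₙ` positive integers with `p ∤ aᵢ` for all `i`, `p` dividing no subset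
sum over a nonempty proper subset `S ⊊ {1, …, n}`, but `p ∣ a₁+⋯+aₙ`. If
`x₁, …, xₙ ∈ R` are pairwise distinct, all reducing to `1` in the residue field,
and `aᵢ ∏_{j≠i}(xⱼ-xᵢ) = (∑aⱼ) ∏_{j≠i} xⱼ` for all `i`, then
`(n-1)·ν(xᵢ - xⱼ) = ν(a₁+⋯+aₙ)` for all distinct `i, j`. -/
theorem stmt16 {R : Type*} [CommRing R] [IsDomain R] [IsDiscreteValuationRing R]
    (p : ℕ) (hp : p.Prime) [CharP (ResidueField R) p]
    (n : ℕ) (hn : 0 < n)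
    (a : Fin n → ℕ) (ha : ∀ i, 0 < a i)
    (hpa : ∀ i, ¬ p ∣ a i)
    (hreg : ∀ S : Finset (Fin n), S.Nonempty → S ≠ univ → ¬ p ∣ ∑ j ∈ S, a j)
    (hpsum : p ∣ ∑ i, a i)
    (x : Fin n → R) (hx : Function.Injective x)
    (hx1 : ∀ i, residue R (x i) = 1)
    (heq : ∀ i, (a i : R) * ∏ j ∈ univ.erase i, (x j - x i) =
      ((∑ j, a j : ℕ) : R) * ∏ j ∈ univ.erase i, x j) :
    ∀ i j, i ≠ j →
      ((n - 1 : ℕ) : ℕ∞) * IsDiscreteValuationRing.addVal R (x i - x j) =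
        IsDiscreteValuationRing.addVal R ((∑ k, a k : ℕ) : R) := by
  classical
  open IsDiscreteValuationRing Polynomial in
  intro i j hij
  have hn1 : n ≠ 1 := by rintro rfl; exact hij (Subsingleton.elim i j)
  have hn2 : 2 ≤ n := by omega
  set v := IsDiscreteValuationRing.addVal R with hv
  set α : R := ((∑ k, a k : ℕ) : R) with hα
  -- the `x i` are units
  have hxu : ∀ i', IsUnit (x i') := fun i' =>
    (residue_ne_zero_iff_isUnit _).1 (by rw [hx1 i']; exact one_ne_zero)
  have hvx : ∀ i', v (x i') = 0 := fun i' => stmt16_addVal_unit (hxu i')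
  -- the `(a i : R)` are units
  have hau : ∀ i', IsUnit ((a i' : R)) := fun i' =>
    (residue_ne_zero_iff_isUnit _).1 (by
      rw [map_natCast]
      exact fun h => hpa i' ((CharP.cast_eq_zero_iff (ResidueField R) p _).1 h))
  have hva : ∀ i', v ((a i' : R)) = 0 := fun i' => stmt16_addVal_unit (hau i')
  have hxne : ∀ {i' j' : Fin n}, i' ≠ j' → x i' - x j' ≠ 0 := fun h =>
    sub_ne_zero.2 (fun hh => h (hx hh))
  -- α is nonzero and a non-unit
  have hα0 : α ≠ 0 := by
    intro h0
    have h := heq i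
    rw [h0, zero_mul] at h
    rcases mul_eq_zero.1 h with h | h
    · exact (hau i).ne_zero h
    · obtain ⟨j', hj', hj0⟩ := Finset.prod_eq_zero_iff.1 h
      exact hxne (Finset.mem_erase.1 hj').1 hj0
  have hαnu : ¬ IsUnit α := by
    rw [← residue_ne_zero_iff_isUnit, not_not, hα, map_natCast]
    exact (CharP.cast_eq_zero_iff (ResidueField R) p _).2 hpsum
  have hvαtop : v α ≠ ⊤ := fun h => hα0 (addVal_eq_top_iff.1 h)
  set m : ℕ := (v α).toNat with hmdef
  have hm : (m : ℕ∞) = v α := ENat.coe_toNat hvαtop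
  have hm1 : 1 ≤ m := by
    rcases Nat.eq_zero_or_pos m with h0 | h; swap; · exact h
    exfalso; exact hαnu (stmt16_unit_of_addVal (by rw [← hm, h0]; rfl))
  -- the matrix of valuations of differences
  set d : Fin n → Fin n → ℕ := fun i' j' => (v (x i' - x j')).toNat with hddef
  have hd : ∀ {i' j' : Fin n}, i' ≠ j' → (d i' j' : ℕ∞) = v (x i' - x j') := fun h =>
    ENat.coe_toNat (fun ht => hxne h (addVal_eq_top_iff.1 ht))
  have hdsymm : ∀ i' j' : Fin n, d i' j' = d j' i' := by
    intro i' j'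
    simp only [hddef]
    have hsw : x i' - x j' = -1 * (x j' - x i') := by ring
    rw [hsw, addVal_mul, stmt16_addVal_unit isUnit_one.neg, zero_add]
  have hdpos : ∀ {i' j' : Fin n}, i' ≠ j' → 1 ≤ d i' j' := by
    intro i' j' h
    by_contra hlt
    have h0 : d i' j' = 0 := by omega
    have : IsUnit (x i' - x j') := stmt16_unit_of_addVal (by rw [← hd h, h0]; rfl)
    rw [← residue_ne_zero_iff_isUnit] at this
    exact this (by rw [map_sub, hx1, hx1, sub_self])
  -- row sums
  have hrow : ∀ i' : Fin n, ∑ j' ∈ univ.erase i', d j' i' = m := by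
    intro i'
    have h := congrArg v (heq i')
    rw [addVal_mul, addVal_mul, stmt16_addVal_prod, stmt16_addVal_prod, hva,
      Finset.sum_eq_zero (fun j' _ => hvx j'), add_zero, zero_add] at h
    rw [Finset.sum_congr rfl
      (fun j' hj' => (hd (Finset.mem_erase.1 hj').1).symm)] at h
    rw [← hm, ← Nat.cast_sum] at h
    exact_mod_cast h
  -- the minimal valuation e
  obtain ⟨⟨i1, j1⟩, hmem, hmin⟩ := Finset.exists_min_image (univ.offDiag)
    (fun q => d q.1 q.2) ⟨(i, j), by simp [Finset.mem_offDiag, hij]⟩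
  have hi1j1 : i1 ≠ j1 := (Finset.mem_offDiag.1 hmem).2.2
  set e : ℕ := d i1 j1 with hedef
  have hemin : ∀ i' j' : Fin n, i' ≠ j' → e ≤ d i' j' := fun i' j' h =>
    hmin (i', j') (by simp [Finset.mem_offDiag, h])
  by_cases hall : ∀ i' j' : Fin n, i' ≠ j' → d i' j' = e
  · -- all valuations equal: conclude
    have hmval : m = (n - 1) * e := by
      rw [← hrow i, Finset.sum_congr rfl
        (fun j' hj' => hall j' i (Finset.mem_erase.1 hj').1), Finset.sum_const,
        Finset.card_erase_of_mem (Finset.mem_univ i), Finset.card_univ,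
        Fintype.card_fin, smul_eq_mul]
    rw [← hd hij, ← hm, hall i j hij, hmval, ← Nat.cast_mul]
  · -- contradiction case
    exfalso
    push_neg at hall
    obtain ⟨i2, j2, hne2, hgt2⟩ := hall
    have hgt2' : e < d i2 j2 := lt_of_le_of_ne (hemin _ _ hne2) (Ne.symm hgt2)
    have hmgt : (n - 1) * e < m := by
      have hlt : ∑ _j' ∈ univ.erase i2, e < ∑ j' ∈ univ.erase i2, d j' i2 := by
        apply Finset.sum_lt_sum
          (fun j' hj' => hemin j' i2 (Finset.mem_erase.1 hj').1)
        refine ⟨j2, Finset.mem_erase.2 ⟨hne2.symm, Finset.mem_univ _⟩, ?_⟩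
        rw [hdsymm j2 i2]; exact hgt2'
      rw [Finset.sum_const, Finset.card_erase_of_mem (Finset.mem_univ i2),
        Finset.card_univ, Fintype.card_fin, smul_eq_mul, hrow i2] at hlt
      exact hlt
    obtain ⟨π, hπ⟩ := IsDiscreteValuationRing.exists_irreducible R
    have hπ0 : π ≠ 0 := hπ.ne_zero
    -- divide out π^e from the differences with x i1
    have hdvd : ∀ j', (π : R) ^ e ∣ (x j' - x i1) := by
      intro j'
      by_cases hji : j' = i1
      · rw [hji, sub_self]; exact dvd_zero _
      · rw [← addVal_le_iff_dvd, hπ.addVal_pow, ← hd hji]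
        exact_mod_cast hemin j' i1 hji
    choose z hz using hdvd
    have hzi1 : z i1 = 0 := by
      have h := hz i1
      rw [sub_self] at h
      rcases mul_eq_zero.1 h.symm with h' | h'
      · exact absurd h' (pow_ne_zero _ hπ0)
      · exact h'
    have hvz : ∀ j' : Fin n, j' ≠ i1 → (e : ℕ∞) + v (z j') = (d j' i1 : ℕ∞) := by
      intro j' hji
      rw [hd hji, hz j', addVal_mul, hπ.addVal_pow]
    -- the class S of i1
    set S : Finset (Fin n) := univ.filter (fun j' => residue R (z j') = 0) with hSdef
    have hi1S : i1 ∈ S := by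
      simp only [hSdef, Finset.mem_filter, Finset.mem_univ, true_and, hzi1, map_zero]
    have hj1S : j1 ∉ S := by
      have hji : j1 ≠ i1 := hi1j1.symm
      have h := hvz j1 hji
      rw [hdsymm j1 i1, ← hedef] at h
      have hz0 : v (z j1) = 0 := by
        have := h
        nth_rewrite 2 [show ((e : ℕ∞)) = (e : ℕ∞) + 0 by rw [add_zero]] at this
        exact WithTop.add_left_cancel (WithTop.coe_ne_top) this
      have : IsUnit (z j1) := stmt16_unit_of_addVal hz0
      rw [← residue_ne_zero_iff_isUnit] at this
      simp only [hSdef, Finset.mem_filter, Finset.mem_univ, true_and]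
      exact this
    have hSne : S ≠ univ := fun h => hj1S (h ▸ Finset.mem_univ j1)
    -- the polynomial identity
    set b : R := (-1 : R) ^ (n - 1) * α * ∏ j', x j' with hbdef
    set G : R[X] := (∑ i', C ((a i' : R) * x i') *
      ∏ j' ∈ univ.erase i', (X - C (x j'))) - C b with hGdef
    have hGeval : ∀ k', G.eval (x k') = 0 := by
      intro k'
      rw [hGdef]
      rw [eval_sub, eval_finset_sum, eval_C]
      rw [Finset.sum_eq_single k' (fun i' _ hik => by
        rw [eval_mul, eval_prod]
        rw [Finset.prod_eq_zero (Finset.mem_erase.2 ⟨Ne.symm hik, Finset.mem_univ k'⟩)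
          (by rw [eval_sub, eval_X, eval_C, sub_self])]
        rw [mul_zero]) (fun h => absurd (Finset.mem_univ k') h)]
      rw [eval_mul, eval_C, eval_prod]
      simp only [eval_sub, eval_X, eval_C]
      have hsign : ∏ j' ∈ univ.erase k', (x k' - x j') =
          (-1 : R) ^ (n - 1) * ∏ j' ∈ univ.erase k', (x j' - x k') := by
        rw [Finset.prod_congr rfl (fun j' _ => show x k' - x j' = (-1) * (x j' - x k') by ring),
          Finset.prod_mul_distrib, Finset.prod_const,
          Finset.card_erase_of_mem (Finset.mem_univ k'), Finset.card_univ, Fintype.card_fin]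
      have hX : x k' * ∏ j' ∈ univ.erase k', x j' = ∏ j', x j' :=
        Finset.mul_prod_erase univ x (Finset.mem_univ k')
      rw [hsign, hbdef]
      have h := heq k'
      linear_combination ((-1 : R) ^ (n - 1) * x k') * h + ((-1 : R) ^ (n - 1) * α) * hX
    have hGdeg : G.natDegree < n := by
      rw [hGdef]
      have h1 : (∑ i', C ((a i' : R) * x i') *
          ∏ j' ∈ univ.erase i', (X - C (x j'))).natDegree ≤ n - 1 := by
        apply Polynomial.natDegree_sum_le_of_forall_le
        intro i' _
        apply le_trans (Polynomial.natDegree_C_mul_le _ _)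
        apply le_trans (Polynomial.natDegree_prod_le _ _)
        rw [Finset.sum_congr rfl (fun j' _ => Polynomial.natDegree_X_sub_C (x j')),
          Finset.sum_const, Finset.card_erase_of_mem (Finset.mem_univ i'),
          Finset.card_univ, Fintype.card_fin, smul_eq_mul, mul_one]
      calc G.natDegree ≤ max (∑ i', C ((a i' : R) * x i') *
              ∏ j' ∈ univ.erase i', (X - C (x j'))).natDegree (C b).natDegree :=
            Polynomial.natDegree_sub_le _ _
        _ ≤ n - 1 := by rw [Polynomial.natDegree_C]; exact max_le h1 (Nat.zero_le _)
        _ < n := by omega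
    have hG0 : G = 0 := by
      apply Polynomial.eq_zero_of_natDegree_lt_card_of_eval_eq_zero G hx hGeval
      rwa [Fintype.card_fin]
    have hident : (∑ i', C ((a i' : R) * x i') *
        ∏ j' ∈ univ.erase i', (X - C (x j'))) = C b := by
      rw [hGdef] at hG0
      exact sub_eq_zero.1 hG0
    -- substitution X ↦ x i1 + π^e X
    set q : R[X] := C (x i1) + C (π ^ e) * X with hqdef
    set φ : R[X] →+* R[X] := eval₂RingHom Polynomial.C q with hφdef
    have hφC : ∀ c : R, φ (C c) = C c := fun c => eval₂_C _ _
    have hφX : φ X = q := eval₂_X _ _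
    have hsub := congrArg φ hident
    rw [map_sum, hφC] at hsub
    have hfac : ∀ j' : Fin n, q - C (x j') = C (π ^ e) * (X - C (z j')) := by
      intro j'
      have h := hz j'
      rw [hqdef, mul_sub, ← C_mul, ← h, C_sub]
      ring
    set P : R[X] := ∑ i', C ((a i' : R) * x i') *
      ∏ j' ∈ univ.erase i', (X - C (z j')) with hPdef
    have hsub2 : C ((π ^ e) ^ (n - 1)) * P = C b := by
      rw [← hsub, hPdef, Finset.mul_sum]
      apply Finset.sum_congr rfl
      intro i' _
      simp only [map_mul, map_prod, map_sub, hφC, hφX, hfac]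
      rw [Finset.prod_mul_distrib, Finset.prod_const,
        Finset.card_erase_of_mem (Finset.mem_univ i'), Finset.card_univ, Fintype.card_fin, C_pow]
      ring
    have hcoeff : ∀ t, (π ^ e) ^ (n - 1) * P.coeff t = (C b).coeff t := by
      intro t
      rw [← hsub2, coeff_C_mul]
    have hPhigh : ∀ t, t ≠ 0 → P.coeff t = 0 := by
      intro t ht
      have h := hcoeff t
      rw [coeff_C, if_neg ht] at h
      rcases mul_eq_zero.1 h with h' | h'
      · exact absurd h' (pow_ne_zero _ (pow_ne_zero _ hπ0))
      · exact h'
    have hc0 : (π ^ e) ^ (n - 1) * P.coeff 0 = b := by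
      have h := hcoeff 0
      rwa [coeff_C, if_pos rfl] at h
    have hPC : P = C (P.coeff 0) := by
      ext t
      rcases Nat.eq_zero_or_pos t with rfl | ht
      · rw [coeff_C, if_pos rfl]
      · rw [coeff_C, if_neg (by omega), hPhigh t (by omega)]
    have hvb : v b = (m : ℕ∞) := by
      rw [hbdef, addVal_mul, addVal_mul, stmt16_addVal_unit (isUnit_one.neg.pow _),
        stmt16_addVal_prod, Finset.sum_eq_zero (fun j' _ => hvx j'), ← hm]
      simp
    have hvc0 : v (P.coeff 0) ≠ 0 := by
      intro h0
      have h := congrArg v hc0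
      rw [addVal_mul, h0, add_zero, ← pow_mul, hπ.addVal_pow, hvb] at h
      have hEq : e * (n - 1) = m := by exact_mod_cast h
      exact (Nat.ne_of_lt hmgt) (by rw [Nat.mul_comm] at hEq; exact hEq)
    have hresc0 : residue R (P.coeff 0) = 0 := by
      by_contra h
      exact hvc0 (stmt16_addVal_unit ((residue_ne_zero_iff_isUnit _).1 h))
    have hPbar : P.map (residue R) = 0 := by
      rw [hPC, Polynomial.map_C, hresc0, Polynomial.C_0]
    have hresid : (∑ i', Polynomial.C ((a i' : ResidueField R)) *
        ∏ j' ∈ univ.erase i', (X - Polynomial.C (residue R (z j')))) = 0 := by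
      rw [← hPbar, hPdef, Polynomial.map_sum]
      apply Finset.sum_congr rfl
      intro i' _
      rw [Polynomial.map_mul, Polynomial.map_C, Polynomial.map_prod]
      rw [map_mul, map_natCast, hx1, mul_one]
      apply congrArg
      apply Finset.prod_congr rfl
      intro j' _
      rw [Polynomial.map_sub, Polynomial.map_C, Polynomial.map_X]
    set g : Polynomial (ResidueField R) :=
      ∏ j' ∈ univ \ S, (X - Polynomial.C (residue R (z j'))) with hgdef
    set s := S.card with hsdef
    have hs1 : 1 ≤ s := Finset.card_pos.2 ⟨i1, hi1S⟩
    have hzS : ∀ j' ∈ S, residue R (z j') = 0 := fun j' hj' => (Finset.mem_filter.1 hj').2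
    have hzNS : ∀ j' ∈ univ \ S, residue R (z j') ≠ 0 := by
      intro j' hj' h0
      exact (Finset.mem_sdiff.1 hj').2 (Finset.mem_filter.2 ⟨Finset.mem_univ _, h0⟩)
    have hcoeffS : ∀ i' ∈ S,
        (∏ j' ∈ univ.erase i', (X - Polynomial.C (residue R (z j')))).coeff (s - 1)
        = g.coeff 0 := by
      intro i' hi'
      have hset : univ.erase i' = (S.erase i') ∪ (univ \ S) := by
        ext j'
        simp only [Finset.mem_erase, Finset.mem_union, Finset.mem_sdiff, Finset.mem_univ,
          true_and, and_true]
        constructor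
        · intro hj
          by_cases hjS : j' ∈ S
          · exact Or.inl ⟨hj, hjS⟩
          · exact Or.inr hjS
        · rintro (⟨h1, _⟩ | h)
          · exact h1
          · rintro rfl; exact h hi'
      have hdisj : Disjoint (S.erase i') (univ \ S) :=
        Finset.disjoint_left.mpr fun j' hj hj2 =>
          (Finset.mem_sdiff.1 hj2).2 (Finset.mem_of_mem_erase hj)
      rw [hset, Finset.prod_union hdisj]
      rw [Finset.prod_congr rfl (fun j' hj' => by
          rw [hzS j' (Finset.mem_of_mem_erase hj'), Polynomial.C_0, sub_zero]),
        Finset.prod_const, Finset.card_erase_of_mem hi']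
      have h := Polynomial.coeff_X_pow_mul g (s - 1) 0
      rwa [zero_add] at h
    have hcoeffNS : ∀ i' ∈ univ \ S,
        (∏ j' ∈ univ.erase i', (X - Polynomial.C (residue R (z j')))).coeff (s - 1) = 0 := by
      intro i' hi'
      have hiS : i' ∉ S := (Finset.mem_sdiff.1 hi').2
      have hset : univ.erase i' = S ∪ ((univ \ S).erase i') := by
        ext j'
        simp only [Finset.mem_erase, Finset.mem_union, Finset.mem_sdiff, Finset.mem_univ,
          true_and, and_true]
        constructor
        · intro hj
          by_cases hjS : j' ∈ S
          · exact Or.inl hjS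
          · exact Or.inr ⟨hj, hjS⟩
        · rintro (h | ⟨h1, _⟩)
          · rintro rfl; exact hiS h
          · exact h1
      have hdisj : Disjoint S ((univ \ S).erase i') :=
        Finset.disjoint_left.mpr fun j' hj hj2 =>
          (Finset.mem_sdiff.1 (Finset.mem_of_mem_erase hj2)).2 hj
      rw [hset, Finset.prod_union hdisj]
      rw [Finset.prod_congr rfl (fun j' hj' => by rw [hzS j' hj', Polynomial.C_0, sub_zero]),
        Finset.prod_const]
      rw [mul_comm, Polynomial.coeff_mul_X_pow']
      rw [if_neg (by omega)]
    have hfinal : (∑ i' ∈ S, (a i' : ResidueField R)) * g.coeff 0 = 0 := by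
      have h := congrArg (fun r => Polynomial.coeff r (s - 1)) hresid
      simp only [Polynomial.coeff_zero] at h
      rw [Polynomial.finset_sum_coeff] at h
      rw [← Finset.sum_sdiff (Finset.subset_univ S)] at h
      rw [Finset.sum_eq_zero (fun i' hi' => by
          rw [Polynomial.coeff_C_mul, hcoeffNS i' hi', mul_zero]), zero_add] at h
      rw [Finset.sum_congr rfl (fun i' hi' => by
          rw [Polynomial.coeff_C_mul, hcoeffS i' hi'])] at h
      rwa [← Finset.sum_mul] at h
    have hg0 : g.coeff 0 ≠ 0 := by
      rw [hgdef, Polynomial.coeff_zero_eq_eval_zero, Polynomial.eval_prod]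
      apply Finset.prod_ne_zero_iff.2
      intro j' hj'
      rw [Polynomial.eval_sub, Polynomial.eval_X, Polynomial.eval_C, zero_sub]
      exact neg_ne_zero.2 (hzNS j' hj')
    have hsum0 : ((∑ i' ∈ S, a i' : ℕ) : ResidueField R) = 0 := by
      rw [Nat.cast_sum]
      rcases mul_eq_zero.1 hfinal with h | h
      · exact h
      · exact absurd h hg0
    exact hreg S ⟨i1, hi1S⟩ hSne ((CharP.cast_eq_zero_iff (ResidueField R) p _).1 hsum0)
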